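/- arXiv:1403.3713 — 3 statements merged into one kernel-verified Lean document; each statement's English description precedes it below -/
import Mathlib

section
/- Let ω : ℝ² → ℝ be continuous with compact support and radial (i.e., ω(x) depends only on |x|), and let f : ℝ² → ℝ be differentiable and radial. Then for every x ∈ ℝ², ((K∗ω)(x)) · ∇f(x) = 0, where K(x) = (−x₂/|x|², x₁/|x|²) is the Biot–Savart kernel and K∗ω denotes componentwise convolution. -/
open MeasureTheory RealInnerProductSpace

noncomputable section

/-- The plane `ℝ²` as a Euclidean (inner product) space. -/
abbrev E2 : Type := EuclideanSpace ℝ (Fin 2)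

/-- The vector `(a, b) ∈ ℝ²`. -/
def vec2 (a b : ℝ) : E2 := (WithLp.equiv 2 (Fin 2 → ℝ)).symm ![a, b]

/-- The two-dimensional Biot–Savart kernel `K(x) = (-x₂/|x|², x₁/|x|²)`
(with the convention `K(0) = 0`, coming from division by zero). -/
def biotSavartK (x : E2) : E2 := vec2 (-(x 1) / ‖x‖ ^ 2) (x 0 / ‖x‖ ^ 2)


lemma vec2_apply0 (a b : ℝ) : vec2 a b 0 = a := rfl
lemma vec2_apply1 (a b : ℝ) : vec2 a b 1 = b := rfl

lemma inner_coords (u v : E2) : ⟪u, v⟫ = u 0 * v 0 + u 1 * v 1 := by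
  simp [PiLp.inner_apply, Fin.sum_univ_two]; ring

/-- `Jx = (x₂, -x₁)`. -/
def jvec (x : E2) : E2 := vec2 (x 1) (-(x 0))

lemma inner_jvec_self (x : E2) : ⟪x, jvec x⟫ = 0 := by
  simp [inner_coords, jvec, vec2_apply0, vec2_apply1]; ring

lemma inner_K (w x : E2) : ⟪biotSavartK w, x⟫ = ⟪w, jvec x⟫ / ‖w‖ ^ 2 := by
  simp only [inner_coords, biotSavartK, jvec, vec2_apply0, vec2_apply1]
  ring

lemma sq_norm_eq (a b : ℝ) (ha : 0 ≤ a) (hb : 0 ≤ b) (h : a ^ 2 = b ^ 2) : a = b := by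
  nlinarith

lemma norm_circle (x : E2) (θ : ℝ) :
    ‖Real.cos θ • x + Real.sin θ • jvec x‖ = ‖x‖ := by
  have h : ⟪Real.cos θ • x + Real.sin θ • jvec x, Real.cos θ • x + Real.sin θ • jvec x⟫
      = ⟪x, x⟫ := by
    simp only [inner_coords, PiLp.add_apply, PiLp.smul_apply, smul_eq_mul, jvec,
      vec2_apply0, vec2_apply1]
    linear_combination ((x 0) ^ 2 + (x 1) ^ 2) * Real.sin_sq_add_cos_sq θ
  rw [real_inner_self_eq_norm_sq, real_inner_self_eq_norm_sq] at h
  exact sq_norm_eq _ _ (norm_nonneg _) (norm_nonneg _) h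

lemma fderiv_radial_jvec (f : E2 → ℝ) (hf : Differentiable ℝ f)
    (hrad : ∀ x y : E2, ‖x‖ = ‖y‖ → f x = f y) (x : E2) :
    fderiv ℝ f x (jvec x) = 0 := by
  set c : ℝ → E2 := fun θ => Real.cos θ • x + Real.sin θ • jvec x with hc
  have hc0 : c 0 = x := by simp [hc]
  have hcd : HasDerivAt c (jvec x) 0 := by
    have h1 : HasDerivAt (fun θ : ℝ => Real.cos θ • x) ((-Real.sin 0) • x) 0 :=
      (Real.hasDerivAt_cos 0).smul_const x
    have h2 : HasDerivAt (fun θ : ℝ => Real.sin θ • jvec x) ((Real.cos 0) • jvec x) 0 :=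
      (Real.hasDerivAt_sin 0).smul_const (jvec x)
    have := h1.add h2
    simp at this; exact this
  have hconst : (fun θ => f (c θ)) = fun _ => f x := by
    funext θ
    exact hrad (c θ) x (by rw [hc]; exact norm_circle x θ)
  have hcomp : HasDerivAt (fun θ => f (c θ)) (fderiv ℝ f x (jvec x)) 0 := by
    have h := ((hf (c 0)).hasFDerivAt).comp_hasDerivAt 0 hcd
    rw [hc0] at h
    exact h
  have hzero : HasDerivAt (fun θ => f (c θ)) 0 0 := by
    rw [hconst]; exact hasDerivAt_const 0 (f x)
  exact hcomp.unique hzero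

lemma inner_gradient_jvec (f : E2 → ℝ) (hf : Differentiable ℝ f)
    (hrad : ∀ x y : E2, ‖x‖ = ‖y‖ → f x = f y) (x : E2) :
    ⟪gradient f x, jvec x⟫ = 0 := by
  have hg := (hf x).hasGradientAt
  have hfd := hg.hasFDerivAt
  have heq : fderiv ℝ f x = (InnerProductSpace.toDual ℝ E2) (gradient f x) := hfd.fderiv
  have h := fderiv_radial_jvec f hf hrad x
  rw [heq] at h
  simpa using h

lemma symmetry_integral (ω : E2 → ℝ)
    (hω_rad : ∀ x y : E2, ‖x‖ = ‖y‖ → ω x = ω y) (x : E2) :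
    ∫ y : E2, ω y * ⟪biotSavartK (x - y), x⟫ = 0 := by
  set R : E2 ≃ₗᵢ[ℝ] E2 := Submodule.reflection (ℝ ∙ x) with hR
  have hRx : R x = x := Submodule.reflection_mem_subspace_eq_self (Submodule.mem_span_singleton_self x)
  have hJ : jvec x ∈ (ℝ ∙ x)ᗮ :=
    Submodule.mem_orthogonal_singleton_iff_inner_right.2 (inner_jvec_self x)
  have hRJ : R (jvec x) = -(jvec x) :=
    Submodule.reflection_mem_subspace_orthogonalComplement_eq_neg hJ
  have key : ∀ y : E2, ω (R y) * ⟪biotSavartK (x - R y), x⟫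
      = -(ω y * ⟪biotSavartK (x - y), x⟫) := by
    intro y
    have hω : ω (R y) = ω y := hω_rad _ _ (R.norm_map y)
    have hxy : x - R y = R (x - y) := by rw [map_sub, hRx]
    have hinner : ⟪R (x - y), jvec x⟫ = -⟪x - y, jvec x⟫ := by
      calc ⟪R (x - y), jvec x⟫ = ⟪R (R (x - y)), R (jvec x)⟫ := (R.inner_map_map _ _).symm
        _ = ⟪x - y, -(jvec x)⟫ := by rw [Submodule.reflection_reflection, hRJ]
        _ = -⟪x - y, jvec x⟫ := inner_neg_right _ _
    rw [hω, hxy, inner_K, inner_K, R.norm_map, hinner]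
    ring
  have hcomp : (∫ y : E2, ω (R y) * ⟪biotSavartK (x - R y), x⟫)
      = ∫ y : E2, ω y * ⟪biotSavartK (x - y), x⟫ :=
    MeasureTheory.integral_comp R (fun y => ω y * ⟪biotSavartK (x - y), x⟫)
  rw [show (fun y : E2 => ω (R y) * ⟪biotSavartK (x - R y), x⟫)
      = fun y : E2 => -(ω y * ⟪biotSavartK (x - y), x⟫) from funext key] at hcomp
  rw [integral_neg] at hcomp
  linarith [hcomp]

lemma gradient_radial_at_zero (f : E2 → ℝ) (hf : Differentiable ℝ f)
    (hrad : ∀ x y : E2, ‖x‖ = ‖y‖ → f x = f y) :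
    gradient f 0 = 0 := by
  have hL : ∀ v : E2, fderiv ℝ f 0 v = 0 := by
    intro v
    have hneg : HasFDerivAt (fun y : E2 => -y) (-(ContinuousLinearMap.id ℝ E2)) 0 :=
      (hasFDerivAt_id (0 : E2)).neg
    have hf0 : HasFDerivAt f (fderiv ℝ f 0) ((fun y : E2 => -y) 0) := by
      simpa using (hf 0).hasFDerivAt
    have hcomp := hf0.comp 0 hneg
    have hfeq : (f ∘ fun y : E2 => -y) = f := by
      funext y; exact hrad (-y) y (norm_neg y)
    rw [hfeq] at hcomp
    have := hcomp.unique (hf 0).hasFDerivAt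
    have hv := congrArg (fun L : E2 →L[ℝ] ℝ => L v) this
    simp only [ContinuousLinearMap.comp_apply, ContinuousLinearMap.neg_apply,
      ContinuousLinearMap.coe_id', id_eq, map_neg] at hv
    linarith
  have hg := (hf 0).hasGradientAt
  have heq : fderiv ℝ f 0 = (InnerProductSpace.toDual ℝ E2) (gradient f 0) :=
    hg.hasFDerivAt.fderiv
  have h := hL (gradient f 0)
  rw [heq] at h
  simp only [InnerProductSpace.toDual_apply_apply] at h
  exact inner_self_eq_zero.1 h

/-- **Lemma 2.1.** If `ω : ℝ² → ℝ` is continuous, compactly supported and radial,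
and `f : ℝ² → ℝ` is differentiable and radial, then `(K∗ω)(x) · ∇f(x) = 0` for every `x`. -/
theorem biotSavart_radial_inner_gradient_radial_eq_zero
    (ω : E2 → ℝ) (f : E2 → ℝ)
    (hω_cont : Continuous ω) (hω_supp : HasCompactSupport ω)
    (hω_rad : ∀ x y : E2, ‖x‖ = ‖y‖ → ω x = ω y)
    (hf_diff : Differentiable ℝ f)
    (hf_rad : ∀ x y : E2, ‖x‖ = ‖y‖ → f x = f y) :
    ∀ x : E2, ⟪(∫ y : E2, ω y • biotSavartK (x - y)), gradient f x⟫ = 0 := by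
  intro x
  by_cases hI : Integrable (fun y : E2 => ω y • biotSavartK (x - y)) volume
  · by_cases hx : x = 0
    · rw [hx, gradient_radial_at_zero f hf_diff hf_rad, inner_zero_right]
    · have hIx : ⟪∫ y : E2, ω y • biotSavartK (x - y), x⟫ = 0 := by
        rw [real_inner_comm, ← integral_inner hI x]
        rw [show (fun y : E2 => ⟪x, ω y • biotSavartK (x - y)⟫)
            = fun y : E2 => ω y * ⟪biotSavartK (x - y), x⟫ by
          funext y; rw [real_inner_smul_right, real_inner_comm]]
        exact symmetry_integral ω hω_rad x
      set I := ∫ y : E2, ω y • biotSavartK (x - y) with hIdef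
      set G := gradient f x with hGdef
      have h1 : I 0 * x 0 + I 1 * x 1 = 0 := by rw [← inner_coords]; exact hIx
      have h2 : G 0 * x 1 + G 1 * (-(x 0)) = 0 := by
        have := inner_gradient_jvec f hf_diff hf_rad x
        rwa [inner_coords, jvec, vec2_apply0, vec2_apply1] at this
      have hx2 : x 0 ^ 2 + x 1 ^ 2 ≠ 0 := by
        have hnorm : x 0 ^ 2 + x 1 ^ 2 = ‖x‖ ^ 2 := by
          rw [← real_inner_self_eq_norm_sq, inner_coords]; ring
        have hxn : ‖x‖ ≠ 0 := norm_ne_zero_iff.2 hx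
        rw [hnorm]
        positivity
      have key : (I 0 * G 0 + I 1 * G 1) * (x 0 ^ 2 + x 1 ^ 2) = 0 := by
        linear_combination (G 0 * x 0 + G 1 * x 1) * h1 + (I 0 * x 1 - I 1 * x 0) * h2
      rw [inner_coords]
      exact (mul_eq_zero.1 key).resolve_right hx2
  · rw [integral_undef hI, inner_zero_left]

end
end

section
/- Let ω : ℝ² → ℝ be continuous with compact support and radial (i.e., ω(x) depends only on |x|). Then for every x ∈ ℝ², the vector (K∗ω)(x) is orthogonal to x, i.e., ((K∗ω)(x)) · x = 0, where K(x) = (−x₂/|x|², x₁/|x|²). -/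
open MeasureTheory RealInnerProductSpace

noncomputable section

lemma inner_biotSavartK (z x : E2) :
    ⟪biotSavartK z, x⟫ = (-(z 1) * x 0 + z 0 * x 1) / ‖z‖ ^ 2 := by
  simp only [biotSavartK, vec2, PiLp.inner_apply, RCLike.inner_apply, starRingEnd_apply,
    star_trivial, Fin.sum_univ_two, WithLp.equiv_symm_apply, PiLp.toLp_apply, Matrix.cons_val_zero,
    Matrix.cons_val_one, Matrix.head_cons]
  ring

/-- If `ω : ℝ² → ℝ` is continuous, compactly supported and radial, then the
Biot–Savart velocity `(K∗ω)(x)` is orthogonal to `x` for every `x ∈ ℝ²`. -/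
theorem biotSavart_radial_inner_self_eq_zero
    (ω : E2 → ℝ)
    (hω_cont : Continuous ω) (hω_supp : HasCompactSupport ω)
    (hω_rad : ∀ x y : E2, ‖x‖ = ‖y‖ → ω x = ω y) :
    ∀ x : E2, ⟪(∫ y : E2, ω y • biotSavartK (x - y)), x⟫ = 0 := by
  intro x
  rcases eq_or_ne x 0 with rfl | hx
  · simp
  set f : E2 → E2 := fun y => ω y • biotSavartK (x - y) with hf
  by_cases hint : Integrable f volume
  swap
  · rw [integral_undef hint]; simp
  -- pull the inner product inside the integral
  have h1 : ⟪∫ y, f y, x⟫ = ∫ y, ⟪f y, x⟫ := by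
    rw [real_inner_comm]
    have h := (innerSL ℝ x).integral_comp_comm hint
    simp only [innerSL_apply_apply] at h
    rw [← h]
    exact integral_congr_ae (Filter.Eventually.of_forall fun y => real_inner_comm _ _)
  rw [h1]
  -- the reflection across the line spanned by x
  set R := Submodule.reflection (ℝ ∙ x) with hRdef
  have hRx : R x = x := (Submodule.reflection_eq_self_iff x).mpr (Submodule.mem_span_singleton_self x)
  have hkey : ∀ y, ⟪f (R y), x⟫ = -⟪f y, x⟫ := by
    intro y
    have hωR : ω (R y) = ω y := hω_rad _ _ (R.norm_map y)
    have hnorm : ‖x - R y‖ = ‖x - y‖ := by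
      conv_lhs => rw [← hRx, ← map_sub]
      exact R.norm_map _
    have hRy : ∀ i, R y i = 2 * (⟪x, y⟫ / ‖x‖ ^ 2 * x i) - y i := by
      intro i
      have h := Submodule.reflection_singleton_apply (𝕜 := ℝ) x y
      rw [hRdef, h]
      simp [PiLp.sub_apply, PiLp.smul_apply, smul_eq_mul]
    simp only [hf, real_inner_smul_left, hωR, inner_biotSavartK, hnorm,
      PiLp.sub_apply, hRy]
    ring
  have hmp : MeasurePreserving (R : E2 → E2) volume volume :=
    (R : E2 ≃ₗᵢ[ℝ] E2).measurePreserving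
  have hemb : MeasurableEmbedding (R : E2 → E2) :=
    (R : E2 ≃ₗᵢ[ℝ] E2).toHomeomorph.measurableEmbedding
  have h2 : ∫ y, ⟪f y, x⟫ = ∫ y, ⟪f (R y), x⟫ :=
    (hmp.integral_comp hemb _).symm
  have h3 : ∫ y, ⟪f (R y), x⟫ = -∫ y, ⟪f y, x⟫ := by
    simp_rw [hkey]
    exact integral_neg _
  have : ∫ y, ⟪f y, x⟫ = -∫ y, ⟪f y, x⟫ := h2.trans h3
  linarith

end
end

section
/- Let g : ℝ² → ℝ² be measurable with g ∈ L²(ℝ²; ℝ²), and suppose g is (positively) homogeneous of degree −1 in the sense that for every l > 0, g(x) = l · g(l x) for almost every x ∈ ℝ². Then g = 0 almost everywhere. -/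
open MeasureTheory
open scoped ENNReal NNReal

noncomputable section

/-- A vector field `g ∈ L²(ℝ²; ℝ²)` which is (positively) homogeneous of
degree `-1`, in the sense that for every `l > 0`, `g(x) = l • g(l x)` for a.e. `x`, vanishes
almost everywhere. -/
theorem homogeneous_deg_neg_one_L2_eq_zero (g : E2 → E2)
    (hg : MemLp g 2 volume)
    (hhom : ∀ l : ℝ, 0 < l → ∀ᵐ x : E2 ∂volume, g x = l • g (l • x)) :
    ∀ᵐ x : E2 ∂volume, g x = 0 := by
  classical
  set f : E2 → ℝ≥0∞ := fun x => (‖g x‖₊ : ℝ≥0∞) ^ (2 : ℕ) with hfdef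
  have hfm : AEMeasurable f volume := by
    exact (hg.1.aemeasurable.nnnorm.coe_nnreal_ennreal).pow_const 2
  have hfin : ∫⁻ x, f x ∂volume ≠ ∞ := by
    have h := lintegral_rpow_enorm_lt_top_of_eLpNorm_lt_top (p := 2) two_ne_zero
      ENNReal.ofNat_ne_top hg.2
    have h2 : (2 : ℝ≥0∞).toReal = (2 : ℝ) := by simp
    rw [h2] at h
    have heq : ∫⁻ x, f x ∂volume = ∫⁻ a, (‖g a‖₊ : ℝ≥0∞) ^ (2 : ℝ) ∂volume := by
      refine lintegral_congr fun x => ?_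
      show (‖g x‖₊ : ℝ≥0∞) ^ (2 : ℕ) = (‖g x‖₊ : ℝ≥0∞) ^ (2 : ℝ)
      rw [← ENNReal.rpow_natCast]
      norm_num
    rw [heq]
    exact h.ne
  -- key scaling identity
  have key : ∀ l : ℝ, 0 < l →
      (∫⁻ x in Metric.ball (0 : E2) l, f x ∂volume)
        = ∫⁻ x in Metric.ball (0 : E2) 1, f x ∂volume := by
    intro l hl
    have hl0 : l ≠ 0 := hl.ne'
    -- pointwise a.e. relation
    have hae : ∀ᵐ x : E2 ∂volume, f x = ENNReal.ofReal (l ^ 2) * f (l • x) := by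
      filter_upwards [hhom l hl] with x hx
      show (‖g x‖₊ : ℝ≥0∞) ^ (2 : ℕ) = ENNReal.ofReal (l ^ 2) * (‖g (l • x)‖₊ : ℝ≥0∞) ^ (2 : ℕ)
      rw [hx, nnnorm_smul]
      push_cast
      rw [mul_pow, ENNReal.ofReal_pow hl.le]
      congr 2
      exact Real.enorm_eq_ofReal hl.le
    -- change of variables for the scaling map
    have hmap : Measure.map (l • · : E2 → E2) volume
        = ENNReal.ofReal |(l ^ (2 : ℕ))⁻¹| • volume := by
      have := Measure.map_addHaar_smul (E := E2) volume hl0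
      rwa [finrank_euclideanSpace_fin] at this
    have hind : ∀ x : E2, (Metric.ball (0 : E2) 1).indicator (fun y => f (l • y)) x
        = (Metric.ball (0 : E2) l).indicator f (l • x) := by
      intro x
      have hmem : l • x ∈ Metric.ball (0 : E2) l ↔ x ∈ Metric.ball (0 : E2) 1 := by
        simp only [Metric.mem_ball, dist_zero_right, norm_smul, Real.norm_eq_abs,
          abs_of_pos hl]
        constructor
        · intro h; nlinarith
        · intro h; nlinarith
      by_cases hx : x ∈ Metric.ball (0 : E2) 1
      · rw [Set.indicator_of_mem hx, Set.indicator_of_mem (hmem.mpr hx)]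
      · rw [Set.indicator_of_notMem hx, Set.indicator_of_notMem (fun h => hx (hmem.mp h))]
    have hindm : AEMeasurable ((Metric.ball (0 : E2) l).indicator f)
        (Measure.map (l • · : E2 → E2) volume) := by
      rw [hmap]
      exact (hfm.indicator Metric.isOpen_ball.measurableSet).smul_measure _
    have hcov : ∫⁻ x in Metric.ball (0 : E2) 1, f (l • x) ∂volume
        = ENNReal.ofReal |(l ^ (2 : ℕ))⁻¹| * ∫⁻ x in Metric.ball (0 : E2) l, f x ∂volume := by
      rw [← lintegral_indicator Metric.isOpen_ball.measurableSet]
      simp_rw [hind]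
      rw [← lintegral_map' hindm (aemeasurable_id.const_smul l),
        hmap, lintegral_smul_measure, lintegral_indicator Metric.isOpen_ball.measurableSet, smul_eq_mul]
    calc ∫⁻ x in Metric.ball (0 : E2) l, f x ∂volume
        = 1 * ∫⁻ x in Metric.ball (0 : E2) l, f x ∂volume := (one_mul _).symm
      _ = (ENNReal.ofReal (l ^ 2) * ENNReal.ofReal |(l ^ (2 : ℕ))⁻¹|)
            * ∫⁻ x in Metric.ball (0 : E2) l, f x ∂volume := by
          congr 1
          rw [← ENNReal.ofReal_mul (by positivity)]
          rw [abs_of_nonneg (by positivity)]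
          rw [mul_inv_cancel₀ (by positivity)]
          simp
      _ = ENNReal.ofReal (l ^ 2) * ∫⁻ x in Metric.ball (0 : E2) 1, f (l • x) ∂volume := by
          rw [hcov, mul_assoc]
      _ = ∫⁻ x in Metric.ball (0 : E2) 1, ENNReal.ofReal (l ^ 2) * f (l • x) ∂volume := by
          rw [lintegral_const_mul' _ _ ENNReal.ofReal_ne_top]
      _ = ∫⁻ x in Metric.ball (0 : E2) 1, f x ∂volume := by
          exact (lintegral_congr_ae (ae_restrict_of_ae hae)).symm
  -- I(1) = 0, via small balls
  have hI1 : ∫⁻ x in Metric.ball (0 : E2) 1, f x ∂volume = 0 := by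
    set s : ℕ → Set E2 := fun n => Metric.ball (0 : E2) (1 / (n + 1)) with hs
    have hμs : Filter.Tendsto (volume ∘ s) Filter.atTop (nhds 0) := by
      have hinter : ⋂ n, s n = {(0 : E2)} := by
        ext x
        simp only [Set.mem_iInter, hs, Metric.mem_ball, dist_zero_right, Set.mem_singleton_iff]
        constructor
        · intro h
          by_contra hx
          have hx' : 0 < ‖x‖ := norm_pos_iff.mpr hx
          obtain ⟨n, hn⟩ := exists_nat_gt (1 / ‖x‖)
          have h2 : ‖x‖ * ((n : ℝ) + 1) < 1 := (lt_div_iff₀ (by positivity)).mp (h n)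
          have h1 : 1 < ‖x‖ * ((n : ℝ) + 1) := by
            have := (div_lt_iff₀ hx').mp hn
            nlinarith
          linarith
        · intro h; subst h; intro n; simpa using by positivity
      have := tendsto_measure_iInter_atTop (μ := (volume : Measure E2)) (s := s)
        (fun n => Metric.isOpen_ball.measurableSet.nullMeasurableSet)
        (fun m n hmn => Metric.ball_subset_ball (by
          have : (m : ℝ) ≤ n := Nat.cast_le.mpr hmn
          apply div_le_div_of_nonneg_left one_pos.le (by positivity) (by linarith)))
        ⟨0, ((measure_ball_lt_top).ne : volume (s 0) ≠ ∞)⟩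
      rw [hinter] at this
      simpa using this
    have htend := tendsto_setLIntegral_zero hfin hμs
    have hconst : (fun n : ℕ => ∫⁻ x in s n, f x ∂volume)
        = fun _ => ∫⁻ x in Metric.ball (0 : E2) 1, f x ∂volume := by
      funext n
      exact key (1 / (n + 1)) (by positivity)
    rw [hconst] at htend
    exact tendsto_nhds_unique tendsto_const_nhds htend
  -- total integral is zero via large balls and monotone convergence
  have htotal : ∫⁻ x, f x ∂volume = 0 := by
    have hsup : ∀ x : E2, (⨆ n : ℕ, (Metric.ball (0 : E2) (n + 1)).indicator f x) = f x := by
      intro x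
      apply le_antisymm
      · exact iSup_le fun n => Set.indicator_le_self _ _ x
      · obtain ⟨n, hn⟩ := exists_nat_gt (‖x‖)
        have hx : x ∈ Metric.ball (0 : E2) (n + 1) := by
          simp only [Metric.mem_ball, dist_zero_right]; linarith
        exact le_trans (le_of_eq (Set.indicator_of_mem hx f).symm)
          (le_iSup (fun n : ℕ => (Metric.ball (0 : E2) ((n : ℝ) + 1)).indicator f x) n)
    calc ∫⁻ x, f x ∂volume
        = ∫⁻ x, ⨆ n : ℕ, (Metric.ball (0 : E2) (n + 1)).indicator f x ∂volume := by
          simp_rw [hsup]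
      _ = ⨆ n : ℕ, ∫⁻ x, (Metric.ball (0 : E2) (n + 1)).indicator f x ∂volume := by
          apply lintegral_iSup'
          · exact fun n => hfm.indicator Metric.isOpen_ball.measurableSet
          · filter_upwards with x
            intro m n hmn
            refine Set.indicator_le_indicator_of_subset
              (Metric.ball_subset_ball ?_) (fun _ => zero_le) x
            have : (m : ℝ) ≤ n := Nat.cast_le.mpr hmn
            linarith
      _ = ⨆ n : ℕ, ∫⁻ x in Metric.ball (0 : E2) (n + 1), f x ∂volume := by
          simp_rw [lintegral_indicator Metric.isOpen_ball.measurableSet]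
      _ = 0 := by
          simp_rw [fun n : ℕ => key ((n : ℝ) + 1) (by positivity)]
          simp [hI1]
  have hzero : ∀ᵐ x : E2 ∂volume, f x = 0 := (lintegral_eq_zero_iff' hfm).mp htotal
  filter_upwards [hzero] with x hx
  have hx' : (‖g x‖₊ : ℝ≥0∞) ^ (2 : ℕ) = 0 := hx
  have h0 : (‖g x‖₊ : ℝ≥0∞) = 0 := (pow_eq_zero_iff two_ne_zero).mp hx'
  simpa using h0
end
end
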